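/- Let ε with 0 < ε ≤ 1 and small enough c > 0 be constants. Throw ⌊εn⌋ balls uniformly and independently into m = ⌈cn/log₂ log₂ log₂ n⌉ bins and let X be the number of bins with ≥ 2 balls. Then E[X] = Ω(n/log₂ log₂ log₂ n), and with probability at least 1 - 1/n, X = Ω(n/log₂ log₂ log₂ n). -/

import Mathlib

open Finset

/-- The number of bins containing 2 or more balls under placement `f`. -/
def collisionCount (balls bins : ℕ) (f : Fin balls → Fin bins) : ℕ :=
  (Finset.univ.filter (fun j : Fin bins =>
      2 ≤ (Finset.univ.filter (fun i : Fin balls => f i = j)).card)).card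

/-- bins with at most one ball -/
def lowBins (b m : ℕ) (f : Fin b → Fin m) : Finset (Fin m) :=
  Finset.univ.filter (fun j => (Finset.univ.filter (fun i => f i = j)).card ≤ 1)

lemma collision_add_low (b m : ℕ) (f : Fin b → Fin m) :
    collisionCount b m f + (lowBins b m f).card = m := by
  classical
  have h := Finset.card_filter_add_card_filter_not
    (s := (univ : Finset (Fin m)))
    (p := fun j => 2 ≤ (univ.filter (fun i : Fin b => f i = j)).card)
  rw [Finset.card_univ, Fintype.card_fin] at h
  rw [collisionCount, lowBins]
  have e : (univ.filter (fun j : Fin m => (univ.filter (fun i : Fin b => f i = j)).card ≤ 1)) =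
      (univ.filter (fun j : Fin m => ¬ 2 ≤ (univ.filter (fun i : Fin b => f i = j)).card)) := by
    ext j; simp only [mem_filter, mem_univ, true_and, not_le]; omega
  rw [e]; exact h

lemma count_subset_low (b m : ℕ) (S : Finset (Fin m)) :
    ((univ : Finset (Fin b → Fin m)).filter (fun f => S ⊆ lowBins b m f)).card ≤
      ∑ r ∈ Finset.range (S.card + 1), b.choose r * S.card ^ r * (m - S.card) ^ (b - r) := by
  classical
  -- preimage of S is small for good f
  have hpre : ∀ f : Fin b → Fin m, S ⊆ lowBins b m f →
      (univ.filter (fun i => f i ∈ S)).card ≤ S.card := by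
    intro f hf
    have hset : (univ.filter (fun i : Fin b => f i ∈ S)) =
        S.biUnion (fun j => univ.filter (fun i : Fin b => f i = j)) := by
      ext i
      simp only [mem_filter, mem_univ, true_and, mem_biUnion]
      constructor
      · intro h; exact ⟨f i, h, rfl⟩
      · rintro ⟨j, hj, rfl⟩; exact hj
    rw [hset]
    calc (S.biUnion fun j => univ.filter (fun i : Fin b => f i = j)).card
        ≤ ∑ j ∈ S, (univ.filter (fun i : Fin b => f i = j)).card := Finset.card_biUnion_le
      _ ≤ ∑ _j ∈ S, 1 := by
          apply Finset.sum_le_sum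
          intro j hj
          have := hf hj
          simpa [lowBins] using this
      _ = S.card := by simp
  -- inner bound
  have inner : ∀ I : Finset (Fin b),
      ((univ : Finset (Fin b → Fin m)).filter (fun f => ∀ i, i ∈ I ↔ f i ∈ S)).card ≤
        S.card ^ I.card * (m - S.card) ^ (b - I.card) := by
    intro I
    set t : Fin b → Finset (Fin m) := fun i => if i ∈ I then S else Sᶜ with ht
    have hle : ((univ : Finset (Fin b → Fin m)).filter (fun f => ∀ i, i ∈ I ↔ f i ∈ S)).card ≤
        ((univ : Finset (Fin b)).pi t).card := by
      apply Finset.card_le_card_of_injOn (fun f => fun i _ => f i)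
      · intro f hf
        simp only [Finset.mem_coe, mem_filter, mem_univ, true_and] at hf
        rw [Finset.mem_coe, Finset.mem_pi]
        intro i _
        by_cases hi : i ∈ I
        · simp only [ht, hi, if_true]
          exact (hf i).mp hi
        · simp only [ht, hi, if_false, Finset.mem_compl]
          exact fun h => hi ((hf i).mpr h)
      · intro f _ g _ h
        funext i
        exact congrFun (congrFun h i) (mem_univ i)
    rw [Finset.card_pi] at hle
    refine hle.trans (le_of_eq ?_)
    rw [← Finset.prod_mul_prod_compl I (fun i => (t i).card)]
    have h1 : ∏ i ∈ I, (t i).card = S.card ^ I.card := by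
      calc ∏ i ∈ I, (t i).card = ∏ _i ∈ I, S.card :=
            Finset.prod_congr rfl (fun i hi => by simp [ht, hi])
        _ = S.card ^ I.card := Finset.prod_const _
    have h2 : ∏ i ∈ Iᶜ, (t i).card = (m - S.card) ^ (b - I.card) := by
      calc ∏ i ∈ Iᶜ, (t i).card = ∏ _i ∈ Iᶜ, (m - S.card) := by
            refine Finset.prod_congr rfl (fun i hi => ?_)
            have : i ∉ I := Finset.mem_compl.mp hi
            simp [ht, this, Finset.card_compl]
        _ = (m - S.card) ^ Iᶜ.card := Finset.prod_const _
        _ = (m - S.card) ^ (b - I.card) := by rw [Finset.card_compl, Fintype.card_fin]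
    rw [h1, h2]
  -- main subset argument
  have hsub : ((univ : Finset (Fin b → Fin m)).filter (fun f => S ⊆ lowBins b m f)) ⊆
      (Finset.range (S.card + 1)).biUnion (fun r =>
        (Finset.powersetCard r (univ : Finset (Fin b))).biUnion (fun I =>
          (univ : Finset (Fin b → Fin m)).filter (fun f => ∀ i, i ∈ I ↔ f i ∈ S))) := by
    intro f hf
    simp only [mem_filter, mem_univ, true_and] at hf
    simp only [mem_biUnion, Finset.mem_range, Finset.mem_powersetCard]
    refine ⟨(univ.filter (fun i => f i ∈ S)).card, by
        have := hpre f hf; omega, univ.filter (fun i => f i ∈ S),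
      ⟨Finset.subset_univ _, rfl⟩, ?_⟩
    simp only [mem_filter, mem_univ, true_and]
    intro i
    simp
  calc ((univ : Finset (Fin b → Fin m)).filter (fun f => S ⊆ lowBins b m f)).card
      ≤ ((Finset.range (S.card + 1)).biUnion (fun r =>
        (Finset.powersetCard r (univ : Finset (Fin b))).biUnion (fun I =>
          (univ : Finset (Fin b → Fin m)).filter (fun f => ∀ i, i ∈ I ↔ f i ∈ S)))).card :=
        Finset.card_le_card hsub
    _ ≤ ∑ r ∈ Finset.range (S.card + 1), ((Finset.powersetCard r (univ : Finset (Fin b))).biUnion (fun I =>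
          (univ : Finset (Fin b → Fin m)).filter (fun f => ∀ i, i ∈ I ↔ f i ∈ S))).card :=
        Finset.card_biUnion_le
    _ ≤ ∑ r ∈ Finset.range (S.card + 1), ∑ I ∈ Finset.powersetCard r (univ : Finset (Fin b)),
          ((univ : Finset (Fin b → Fin m)).filter (fun f => ∀ i, i ∈ I ↔ f i ∈ S)).card :=
        Finset.sum_le_sum (fun r _ => Finset.card_biUnion_le)
    _ ≤ ∑ r ∈ Finset.range (S.card + 1), ∑ I ∈ Finset.powersetCard r (univ : Finset (Fin b)),
          S.card ^ I.card * (m - S.card) ^ (b - I.card) :=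
        Finset.sum_le_sum (fun r _ => Finset.sum_le_sum (fun I _ => inner I))
    _ = ∑ r ∈ Finset.range (S.card + 1), ∑ I ∈ Finset.powersetCard r (univ : Finset (Fin b)),
          S.card ^ r * (m - S.card) ^ (b - r) := by
        refine Finset.sum_congr rfl (fun r _ => Finset.sum_congr rfl (fun I hI => ?_))
        rw [(Finset.mem_powersetCard.mp hI).2]
    _ = ∑ r ∈ Finset.range (S.card + 1), b.choose r * (S.card ^ r * (m - S.card) ^ (b - r)) := by
        refine Finset.sum_congr rfl (fun r _ => ?_)
        rw [Finset.sum_const, Finset.card_powersetCard, Finset.card_univ, Fintype.card_fin,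
          smul_eq_mul]
    _ = ∑ r ∈ Finset.range (S.card + 1), b.choose r * S.card ^ r * (m - S.card) ^ (b - r) := by
        refine Finset.sum_congr rfl (fun r _ => by ring)

lemma moment_eq (b m k : ℕ) :
    ∑ f : Fin b → Fin m, ((lowBins b m f).card.choose k) =
      ∑ S ∈ Finset.powersetCard k (univ : Finset (Fin m)),
        ((univ : Finset (Fin b → Fin m)).filter (fun f => S ⊆ lowBins b m f)).card := by
  classical
  have h1 : ∀ f : Fin b → Fin m, (lowBins b m f).card.choose k =
      ∑ S ∈ Finset.powersetCard k (univ : Finset (Fin m)),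
        (if S ⊆ lowBins b m f then 1 else 0) := by
    intro f
    have e : Finset.powersetCard k (lowBins b m f) =
        (Finset.powersetCard k (univ : Finset (Fin m))).filter (fun S => S ⊆ lowBins b m f) := by
      ext S
      simp only [Finset.mem_powersetCard, Finset.mem_filter, Finset.subset_univ, true_and]
      tauto
    rw [← Finset.card_powersetCard, e, Finset.card_filter]
  simp_rw [h1]
  rw [Finset.sum_comm]
  refine Finset.sum_congr rfl (fun S _ => ?_)
  rw [Finset.card_filter]

lemma tail_le (b m k h : ℕ) :
    ((univ : Finset (Fin b → Fin m)).filter (fun f => h ≤ (lowBins b m f).card)).card * h.choose k ≤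
      ∑ f : Fin b → Fin m, ((lowBins b m f).card.choose k) := by
  classical
  calc ((univ : Finset (Fin b → Fin m)).filter (fun f => h ≤ (lowBins b m f).card)).card * h.choose k
      = ∑ _f ∈ (univ : Finset (Fin b → Fin m)).filter (fun f => h ≤ (lowBins b m f).card), h.choose k := by
        rw [Finset.sum_const, smul_eq_mul]
    _ ≤ ∑ f ∈ (univ : Finset (Fin b → Fin m)).filter (fun f => h ≤ (lowBins b m f).card),
          ((lowBins b m f).card.choose k) := by
        refine Finset.sum_le_sum (fun f hf => ?_)
        exact Nat.choose_le_choose k (Finset.mem_filter.mp hf).2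
    _ ≤ ∑ f : Fin b → Fin m, ((lowBins b m f).card.choose k) :=
        Finset.sum_le_sum_of_subset (Finset.filter_subset _ _)

lemma fact_le_fact_mul_pow {r k : ℕ} (h : r ≤ k) : k.factorial ≤ r.factorial * k ^ (k - r) := by
  induction k with
  | zero => interval_cases r; simp
  | succ n ih =>
    rcases Nat.eq_or_lt_of_le h with h' | h'
    · subst h'; simp
    · have hr : r ≤ n := Nat.lt_succ_iff.mp h'
      have ihn := ih hr
      calc (n+1).factorial = (n+1) * n.factorial := rfl
        _ ≤ (n+1) * (r.factorial * n ^ (n - r)) := Nat.mul_le_mul_left _ ihn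
        _ ≤ (n+1) * (r.factorial * (n+1) ^ (n - r)) := by
            exact Nat.mul_le_mul_left _ (Nat.mul_le_mul_left _
              (Nat.pow_le_pow_left (Nat.le_succ n) _))
        _ = r.factorial * (n+1) ^ (n - r + 1) := by ring
        _ = r.factorial * (n+1) ^ (n + 1 - r) := by
            congr 2; omega

lemma pow_self_le_exp_mul_factorial (k : ℕ) :
    (k : ℝ) ^ k ≤ Real.exp 1 ^ k * k.factorial := by
  induction k with
  | zero => simp
  | succ n ih =>
    rcases Nat.eq_zero_or_pos n with h | h
    · subst h
      have h1 : (1:ℝ) ≤ Real.exp 1 := Real.one_le_exp (by norm_num)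
      norm_num
    · have hn : (0:ℝ) < n := by exact_mod_cast h
      have key : ((n:ℝ) + 1) ^ n ≤ Real.exp 1 * (n:ℝ) ^ n := by
        have h1 : ((n:ℝ) + 1) = (n:ℝ) * (1 + 1/(n:ℝ)) := by field_simp
        have h2 : (1 + 1/(n:ℝ)) ^ n ≤ Real.exp 1 := by
          have h3 : (1 + 1/(n:ℝ)) ≤ Real.exp (1/(n:ℝ)) := by
            have := Real.add_one_le_exp (1/(n:ℝ)); linarith
          calc (1 + 1/(n:ℝ)) ^ n ≤ Real.exp (1/(n:ℝ)) ^ n := by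
                apply pow_le_pow_left₀ (by positivity) h3
            _ = Real.exp ((n:ℝ) * (1/(n:ℝ))) := (Real.exp_nat_mul _ n).symm
            _ = Real.exp 1 := by rw [mul_one_div, div_self (ne_of_gt hn)]
        calc ((n:ℝ) + 1) ^ n = (n:ℝ) ^ n * (1 + 1/(n:ℝ)) ^ n := by
              rw [h1, mul_pow]
          _ ≤ (n:ℝ) ^ n * Real.exp 1 := by
              apply mul_le_mul_of_nonneg_left h2 (by positivity)
          _ = Real.exp 1 * (n:ℝ) ^ n := mul_comm _ _
      have hfact : ((n+1).factorial : ℝ) = ((n:ℝ)+1) * n.factorial := by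
        rw [Nat.factorial_succ]; push_cast; ring
      push_cast
      calc ((n:ℝ)+1) ^ (n+1) = ((n:ℝ)+1) * ((n:ℝ)+1) ^ n := by ring
        _ ≤ ((n:ℝ)+1) * (Real.exp 1 * (n:ℝ) ^ n) := by
            apply mul_le_mul_of_nonneg_left key (by positivity)
        _ ≤ ((n:ℝ)+1) * (Real.exp 1 * (Real.exp 1 ^ n * n.factorial)) := by
            apply mul_le_mul_of_nonneg_left (mul_le_mul_of_nonneg_left ih (le_of_lt (Real.exp_pos 1))) (by positivity)
        _ = Real.exp 1 ^ (n+1) * (((n:ℝ)+1) * n.factorial) := by ring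
        _ = Real.exp 1 ^ (n+1) * (((n:ℝ)+1) * n.factorial) := by ring
        _ = Real.exp 1 ^ (n+1) * (n+1).factorial := by rw [hfact]

lemma four_e_T_le (T : ℝ) (hT : 100 ≤ T) : 4 * Real.exp 1 * T ≤ Real.exp (T / 2) := by
  have he : Real.exp 1 < 2.7182818286 := Real.exp_one_lt_d9
  have h1 : (1 + T/6) ^ 3 ≤ Real.exp (T/2) := by
    have h2 : 1 + T/6 ≤ Real.exp (T/6) := by
      have := Real.add_one_le_exp (T/6); linarith
    calc (1 + T/6) ^ 3 ≤ Real.exp (T/6) ^ 3 := by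
          apply pow_le_pow_left₀ (by linarith) h2
      _ = Real.exp ((3:ℕ) * (T/6)) := (Real.exp_nat_mul _ 3).symm
      _ = Real.exp (T/2) := by
          congr 1
          push_cast
          ring
  have h3 : 4 * Real.exp 1 * T ≤ (1 + T/6) ^ 3 := by nlinarith [sq_nonneg T, sq_nonneg (T-100)]
  linarith

lemma est (b m k h n' : ℕ)
    (hk : 1 ≤ k) (hkm : 4 * k ≤ m) (hhm : m ≤ 2 * h) (hhm' : h ≤ m)
    (hbm : 100 * m ≤ b)
    (hn : (n' : ℝ) * (k + 1) ≤ Real.exp ((k : ℝ) * b / (4 * m))) :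
    (n' : ℝ) * (m.choose k) *
        ((∑ r ∈ Finset.range (k + 1), b.choose r * k ^ r * (m - k) ^ (b - r) : ℕ) : ℝ) ≤
      (h.choose k) * (m : ℝ) ^ b := by
  have hm4 : 4 ≤ m := le_trans (by omega) hkm
  have hkm' : k ≤ m := by omega
  have hmb : m ≤ b := by omega
  have hkb : k ≤ b := by omega
  have hm0 : 0 < m := by omega
  have hb0 : 0 < b := by omega
  have hMpos : (0:ℝ) < m := by exact_mod_cast hm0
  have hBpos : (0:ℝ) < b := by exact_mod_cast hb0
  have hKnn : (0:ℝ) ≤ k := by positivity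
  -- Step 1 : m.choose k ≤ 4^k * h.choose k  (in ℕ)
  have step1 : m.choose k ≤ 4 ^ k * h.choose k := by
    have e1 : m.descFactorial k ≤ m ^ k := Nat.descFactorial_le_pow _ _
    have e2 : (h + 1 - k) ^ k ≤ h.descFactorial k := by
      rw [Nat.descFactorial_eq_prod_range]
      calc (h + 1 - k) ^ k = ∏ _i ∈ Finset.range k, (h + 1 - k) := by
            rw [Finset.prod_const, Finset.card_range]
        _ ≤ ∏ i ∈ Finset.range k, (h - i) := by
            refine Finset.prod_le_prod' (fun i hi => ?_)
            have := Finset.mem_range.mp hi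
            omega
    have e3 : m ^ k ≤ 4 ^ k * (h + 1 - k) ^ k := by
      rw [← mul_pow]
      exact Nat.pow_le_pow_left (by omega) k
    have chain : k.factorial * m.choose k ≤ k.factorial * (4 ^ k * h.choose k) := by
      calc k.factorial * m.choose k = m.descFactorial k :=
            (Nat.descFactorial_eq_factorial_mul_choose m k).symm
        _ ≤ m ^ k := e1
        _ ≤ 4 ^ k * (h + 1 - k) ^ k := e3
        _ ≤ 4 ^ k * h.descFactorial k := Nat.mul_le_mul_left _ e2
        _ = 4 ^ k * (k.factorial * h.choose k) := by
            rw [Nat.descFactorial_eq_factorial_mul_choose]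
        _ = k.factorial * (4 ^ k * h.choose k) := by ring
    exact Nat.le_of_mul_le_mul_left chain (Nat.factorial_pos k)
  -- Step 2 : k! * Σ ≤ (k+1) * (b^k * k^k * (m-k)^(b-k))  (in ℕ)
  have step2 : k.factorial * (∑ r ∈ Finset.range (k + 1), b.choose r * k ^ r * (m - k) ^ (b - r)) ≤
      (k + 1) * (b ^ k * k ^ k * (m - k) ^ (b - k)) := by
    rw [Finset.mul_sum]
    have hterm : ∀ r ∈ Finset.range (k + 1),
        k.factorial * (b.choose r * k ^ r * (m - k) ^ (b - r)) ≤
          b ^ k * k ^ k * (m - k) ^ (b - k) := by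
      intro r hr
      have hrk : r ≤ k := by have := Finset.mem_range.mp hr; omega
      have p1 : k.factorial ≤ r.factorial * k ^ (k - r) := fact_le_fact_mul_pow hrk
      have p2 : r.factorial * b.choose r ≤ b ^ r := by
        rw [← Nat.descFactorial_eq_factorial_mul_choose]
        exact Nat.descFactorial_le_pow _ _
      have p3 : (m - k) ^ (b - r) = (m - k) ^ (b - k) * (m - k) ^ (k - r) := by
        rw [← pow_add]
        congr 1
        omega
      have p4 : (m - k) ^ (k - r) ≤ b ^ (k - r) :=
        Nat.pow_le_pow_left (by omega) _
      calc k.factorial * (b.choose r * k ^ r * (m - k) ^ (b - r))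
          ≤ (r.factorial * k ^ (k - r)) * (b.choose r * k ^ r * (m - k) ^ (b - r)) :=
            Nat.mul_le_mul_right _ p1
        _ = (r.factorial * b.choose r) * (k ^ (k - r) * k ^ r) * (m - k) ^ (b - r) := by ring
        _ = (r.factorial * b.choose r) * k ^ k * (m - k) ^ (b - r) := by
            rw [← pow_add, Nat.sub_add_cancel hrk]
        _ ≤ b ^ r * k ^ k * (m - k) ^ (b - r) := by
            exact Nat.mul_le_mul_right _ (Nat.mul_le_mul_right _ p2)
        _ = b ^ r * k ^ k * ((m - k) ^ (b - k) * (m - k) ^ (k - r)) := by rw [p3]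
        _ ≤ b ^ r * k ^ k * ((m - k) ^ (b - k) * b ^ (k - r)) := by
            exact Nat.mul_le_mul_left _ (Nat.mul_le_mul_left _ p4)
        _ = (b ^ r * b ^ (k - r)) * k ^ k * (m - k) ^ (b - k) := by ring
        _ = b ^ k * k ^ k * (m - k) ^ (b - k) := by
            rw [← pow_add, Nat.add_sub_cancel' hrk]
    calc ∑ r ∈ Finset.range (k + 1), k.factorial * (b.choose r * k ^ r * (m - k) ^ (b - r))
        ≤ ∑ _r ∈ Finset.range (k + 1), b ^ k * k ^ k * (m - k) ^ (b - k) :=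
          Finset.sum_le_sum hterm
      _ = (k + 1) * (b ^ k * k ^ k * (m - k) ^ (b - k)) := by
          rw [Finset.sum_const, Finset.card_range, smul_eq_mul]
  -- cast step2 to ℝ and divide by k!
  have hfpos : (0:ℝ) < (k.factorial : ℝ) := by exact_mod_cast Nat.factorial_pos k
  have hcast_mk : ((m - k : ℕ) : ℝ) = (m : ℝ) - k := by
    rw [Nat.cast_sub hkm']
  have step2R : (k.factorial : ℝ) *
      ((∑ r ∈ Finset.range (k + 1), b.choose r * k ^ r * (m - k) ^ (b - r) : ℕ) : ℝ) ≤
      ((k:ℝ) + 1) * ((b:ℝ) ^ k * (k:ℝ) ^ k * ((m:ℝ) - k) ^ (b - k)) := by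
    have h2 : ((k.factorial * (∑ r ∈ Finset.range (k + 1), b.choose r * k ^ r * (m - k) ^ (b - r)) : ℕ) : ℝ) ≤
        (((k + 1) * (b ^ k * k ^ k * (m - k) ^ (b - k)) : ℕ) : ℝ) := by exact_mod_cast step2
    have h3 : ((k.factorial * (∑ r ∈ Finset.range (k + 1), b.choose r * k ^ r * (m - k) ^ (b - r)) : ℕ) : ℝ) =
        (k.factorial : ℝ) * ((∑ r ∈ Finset.range (k + 1), b.choose r * k ^ r * (m - k) ^ (b - r) : ℕ) : ℝ) := by
      push_cast
      ring
    have h4 : (((k + 1) * (b ^ k * k ^ k * (m - k) ^ (b - k)) : ℕ) : ℝ) =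
        ((k:ℝ) + 1) * ((b:ℝ) ^ k * (k:ℝ) ^ k * ((m:ℝ) - k) ^ (b - k)) := by
      push_cast [hcast_mk]
      ring
    rw [h3, h4] at h2
    exact h2
  -- Σ ≤ (k+1) * b^k * e^k * (m-k)^(b-k)
  have hSum : ((∑ r ∈ Finset.range (k + 1), b.choose r * k ^ r * (m - k) ^ (b - r) : ℕ) : ℝ) ≤
      (k + 1) * (b:ℝ) ^ k * Real.exp 1 ^ k * ((m:ℝ) - k) ^ (b - k) := by
    have hx := pow_self_le_exp_mul_factorial k
    have hmk_nn : (0:ℝ) ≤ (m:ℝ) - k := by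
      have : (k:ℝ) ≤ m := by exact_mod_cast hkm'
      linarith
    have key : (k + 1) * ((b:ℝ) ^ k * (k:ℝ) ^ k * ((m:ℝ) - k) ^ (b - k)) ≤
        (k.factorial : ℝ) * ((k + 1) * (b:ℝ) ^ k * Real.exp 1 ^ k * ((m:ℝ) - k) ^ (b - k)) := by
      calc (k + 1) * ((b:ℝ) ^ k * (k:ℝ) ^ k * ((m:ℝ) - k) ^ (b - k))
          ≤ (k + 1) * ((b:ℝ) ^ k * (Real.exp 1 ^ k * k.factorial) * ((m:ℝ) - k) ^ (b - k)) := by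
            have hb1 : (0:ℝ) ≤ (k:ℝ)+1 := by positivity
            apply mul_le_mul_of_nonneg_left _ hb1
            apply mul_le_mul_of_nonneg_right _ (by positivity)
            apply mul_le_mul_of_nonneg_left hx (by positivity)
        _ = (k.factorial : ℝ) * ((k + 1) * (b:ℝ) ^ k * Real.exp 1 ^ k * ((m:ℝ) - k) ^ (b - k)) := by
            ring
    have := le_trans step2R key
    exact le_of_mul_le_mul_left this hfpos
  -- (m-k)^(b-k) ≤ m^(b-k) * exp(-(k*(b-k))/m)
  have hpow : ((m:ℝ) - k) ^ (b - k) ≤ (m:ℝ) ^ (b - k) * Real.exp (-((k:ℝ) * ((b:ℝ) - k) / m)) := by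
    have h1 : (m:ℝ) - k ≤ (m:ℝ) * Real.exp (-(k:ℝ)/m) := by
      have h2 : -(k:ℝ)/m + 1 ≤ Real.exp (-(k:ℝ)/m) := by
        have := Real.add_one_le_exp (-(k:ℝ)/m); linarith
      have h3 : (m:ℝ) * (-(k:ℝ)/m + 1) ≤ (m:ℝ) * Real.exp (-(k:ℝ)/m) :=
        mul_le_mul_of_nonneg_left h2 (le_of_lt hMpos)
      have h4 : (m:ℝ) * (-(k:ℝ)/m + 1) = (m:ℝ) - k := by field_simp; ring
      linarith
    have hmk_nn : (0:ℝ) ≤ (m:ℝ) - k := by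
      have : (k:ℝ) ≤ m := by exact_mod_cast hkm'
      linarith
    calc ((m:ℝ) - k) ^ (b - k) ≤ ((m:ℝ) * Real.exp (-(k:ℝ)/m)) ^ (b - k) :=
          pow_le_pow_left₀ hmk_nn h1 _
      _ = (m:ℝ) ^ (b - k) * Real.exp (-(k:ℝ)/m) ^ (b - k) := mul_pow _ _ _
      _ = (m:ℝ) ^ (b - k) * Real.exp (((b - k : ℕ) : ℝ) * (-(k:ℝ)/m)) := by
          rw [Real.exp_nat_mul]
      _ = (m:ℝ) ^ (b - k) * Real.exp (-((k:ℝ) * ((b:ℝ) - k) / m)) := by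
          congr 1
          rw [Nat.cast_sub hkb]
          ring
  -- the scalar bound
  have scalar : (n' : ℝ) * (k + 1) * ((4 * Real.exp 1 * ((b:ℝ)/m)) ^ k) *
      Real.exp (-((k:ℝ) * ((b:ℝ) - k) / m)) ≤ 1 := by
    have hT : (100:ℝ) ≤ (b:ℝ)/m := by
      rw [le_div_iff₀ hMpos]
      exact_mod_cast hbm
    have h1 : (4 * Real.exp 1 * ((b:ℝ)/m)) ^ k ≤ Real.exp ((k:ℝ) * ((b:ℝ)/m/2)) := by
      calc (4 * Real.exp 1 * ((b:ℝ)/m)) ^ k ≤ Real.exp ((b:ℝ)/m/2) ^ k := by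
            apply pow_le_pow_left₀ (by positivity) (four_e_T_le _ hT)
        _ = Real.exp ((k:ℝ) * ((b:ℝ)/m/2)) := (Real.exp_nat_mul _ k).symm
    calc (n' : ℝ) * (k + 1) * ((4 * Real.exp 1 * ((b:ℝ)/m)) ^ k) *
          Real.exp (-((k:ℝ) * ((b:ℝ) - k) / m))
        ≤ Real.exp ((k : ℝ) * b / (4 * m)) * Real.exp ((k:ℝ) * ((b:ℝ)/m/2)) *
          Real.exp (-((k:ℝ) * ((b:ℝ) - k) / m)) := by
          apply mul_le_mul_of_nonneg_right _ (le_of_lt (Real.exp_pos _))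
          apply mul_le_mul hn h1 (by positivity) (le_of_lt (Real.exp_pos _))
      _ = Real.exp ((k : ℝ) * b / (4 * m) + (k:ℝ) * ((b:ℝ)/m/2) + -((k:ℝ) * ((b:ℝ) - k) / m)) := by
          rw [← Real.exp_add, ← Real.exp_add]
      _ ≤ Real.exp 0 := by
          apply Real.exp_le_exp.mpr
          have hKB : 4 * (k:ℝ) ≤ (b:ℝ) := by
            have h5 : (4 * k : ℕ) ≤ b := by omega
            exact_mod_cast h5
          have heq : (k : ℝ) * b / (4 * m) + (k:ℝ) * ((b:ℝ)/m/2) + -((k:ℝ) * ((b:ℝ) - k) / m) =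
              ((k:ℝ) * ((k:ℝ) - (b:ℝ)/4)) / m := by
            field_simp
            ring
          rw [heq]
          apply div_nonpos_of_nonpos_of_nonneg _ (le_of_lt hMpos)
          apply mul_nonpos_of_nonneg_of_nonpos hKnn
          linarith
      _ = 1 := Real.exp_zero
  -- assemble
  have hchnn : (0:ℝ) ≤ (h.choose k : ℝ) := by positivity
  have step1R : ((m.choose k : ℕ) : ℝ) ≤ (4:ℝ) ^ k * (h.choose k) := by exact_mod_cast step1
  have hSumnn : (0:ℝ) ≤ ((∑ r ∈ Finset.range (k + 1), b.choose r * k ^ r * (m - k) ^ (b - r) : ℕ) : ℝ) := by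
    positivity
  calc (n' : ℝ) * (m.choose k) *
        ((∑ r ∈ Finset.range (k + 1), b.choose r * k ^ r * (m - k) ^ (b - r) : ℕ) : ℝ)
      ≤ (n' : ℝ) * ((4:ℝ) ^ k * (h.choose k)) *
        ((k + 1) * (b:ℝ) ^ k * Real.exp 1 ^ k * ((m:ℝ) - k) ^ (b - k)) := by
        apply mul_le_mul
        · exact mul_le_mul_of_nonneg_left step1R (by positivity)
        · exact hSum
        · exact hSumnn
        · positivity
    _ ≤ (n' : ℝ) * ((4:ℝ) ^ k * (h.choose k)) *
        ((k + 1) * (b:ℝ) ^ k * Real.exp 1 ^ k *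
          ((m:ℝ) ^ (b - k) * Real.exp (-((k:ℝ) * ((b:ℝ) - k) / m)))) := by
        gcongr
    _ = (h.choose k : ℝ) * ((m:ℝ) ^ k * (m:ℝ) ^ (b - k)) *
        ((n' : ℝ) * (k + 1) * ((4 * Real.exp 1 * ((b:ℝ)/m)) ^ k) *
          Real.exp (-((k:ℝ) * ((b:ℝ) - k) / m))) := by
        rw [mul_pow, mul_pow, div_pow]
        field_simp
    _ ≤ (h.choose k : ℝ) * ((m:ℝ) ^ k * (m:ℝ) ^ (b - k)) * 1 := by
        apply mul_le_mul_of_nonneg_left scalar (by positivity)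
    _ = (h.choose k : ℝ) * (m : ℝ) ^ b := by
        rw [mul_one, ← pow_add]
        congr 2
        omega

lemma logb_le_two_log {x : ℝ} (hx : 1 ≤ x) : Real.logb 2 x ≤ 2 * Real.log x := by
  have hl2 : (0.6931471803 : ℝ) < Real.log 2 := Real.log_two_gt_d9
  have hlx : 0 ≤ Real.log x := Real.log_nonneg hx
  rw [Real.logb, div_le_iff₀ (by linarith)]
  nlinarith

lemma logb_le_two_mul {x : ℝ} (hx : 1 ≤ x) : Real.logb 2 x ≤ 2 * x := by
  have h1 := logb_le_two_log hx
  have h2 : Real.log x ≤ x - 1 := Real.log_le_sub_one_of_pos (by linarith)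
  linarith

lemma log_le_four_sqrt_sqrt {x : ℝ} (hx : 1 ≤ x) : Real.log x ≤ 4 * Real.sqrt (Real.sqrt x) := by
  have hx0 : (0:ℝ) ≤ x := by linarith
  have h1 : Real.log (Real.sqrt x) = Real.log x / 2 := Real.log_sqrt hx0
  have h2 : Real.log (Real.sqrt (Real.sqrt x)) = Real.log (Real.sqrt x) / 2 :=
    Real.log_sqrt (Real.sqrt_nonneg x)
  have h3 : (0:ℝ) < Real.sqrt (Real.sqrt x) := by
    apply Real.sqrt_pos.mpr
    apply Real.sqrt_pos.mpr
    linarith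
  have h4 : Real.log (Real.sqrt (Real.sqrt x)) ≤ Real.sqrt (Real.sqrt x) := by
    have := Real.log_le_sub_one_of_pos h3
    linarith
  linarith [h4]


/-- main bad-set bound, combining the combinatorial lemmas with `est`. -/
lemma main_bound (b m k h n' : ℕ)
    (hk : 1 ≤ k) (hkm : 4 * k ≤ m) (hhm : m ≤ 2 * h) (hhm' : h ≤ m)
    (hbm : 100 * m ≤ b)
    (hn : (n' : ℝ) * (k + 1) ≤ Real.exp ((k : ℝ) * b / (4 * m))) :
    (n' : ℝ) * ((univ : Finset (Fin b → Fin m)).filter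
        (fun f => h ≤ (lowBins b m f).card)).card ≤ (m : ℝ) ^ b := by
  classical
  set Bad := ((univ : Finset (Fin b → Fin m)).filter (fun f => h ≤ (lowBins b m f).card))
  set Bnd := ∑ r ∈ Finset.range (k + 1), b.choose r * k ^ r * (m - k) ^ (b - r) with hBnd
  have hcomb : Bad.card * h.choose k ≤ m.choose k * Bnd := by
    calc Bad.card * h.choose k ≤ ∑ f : Fin b → Fin m, ((lowBins b m f).card.choose k) :=
          tail_le b m k h
      _ = ∑ S ∈ Finset.powersetCard k (univ : Finset (Fin m)),
            ((univ : Finset (Fin b → Fin m)).filter (fun f => S ⊆ lowBins b m f)).card :=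
          moment_eq b m k
      _ ≤ ∑ S ∈ Finset.powersetCard k (univ : Finset (Fin m)), Bnd := by
          refine Finset.sum_le_sum (fun S hS => ?_)
          have hcard : S.card = k := (Finset.mem_powersetCard.mp hS).2
          have := count_subset_low b m S
          rw [hcard] at this
          exact this
      _ = m.choose k * Bnd := by
          rw [Finset.sum_const, Finset.card_powersetCard, Finset.card_univ, Fintype.card_fin,
            smul_eq_mul]
  have hchpos : (0:ℝ) < (h.choose k : ℝ) := by
    have : 0 < h.choose k := Nat.choose_pos (by omega)
    exact_mod_cast this
  have hcombR : (Bad.card : ℝ) * (h.choose k : ℝ) ≤ (m.choose k : ℝ) * (Bnd : ℝ) := by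
    exact_mod_cast hcomb
  have hestR := est b m k h n' hk hkm hhm hhm' hbm hn
  have key : (n' : ℝ) * Bad.card * (h.choose k : ℝ) ≤ (m:ℝ) ^ b * (h.choose k : ℝ) := by
    calc (n' : ℝ) * Bad.card * (h.choose k : ℝ) = (n':ℝ) * ((Bad.card : ℝ) * (h.choose k)) := by
          ring
      _ ≤ (n':ℝ) * ((m.choose k : ℝ) * Bnd) := by
          apply mul_le_mul_of_nonneg_left hcombR (by positivity)
      _ = (n' : ℝ) * (m.choose k) * (Bnd : ℝ) := by ring
      _ ≤ (h.choose k) * (m : ℝ) ^ b := hestR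
      _ = (m:ℝ) ^ b * (h.choose k : ℝ) := by ring
  exact le_of_mul_le_mul_right key hchpos



lemma help1 (c L lg s ss n : ℝ) (hc : 0 < c) (hlogpos : 0 < lg)
    (hsq1 : 0 ≤ s) (hsq2 : s ^ 2 = n) (hssq : ss ^ 2 = s) (hss0 : 0 ≤ ss)
    (hlogsq : lg ≤ 4 * ss) (hsqn : 1024 / c ≤ s) (hLpos : 0 < L) (hLup : L ≤ 8 * lg) :
    8 * lg ≤ c * n / L := by
  have h3 : lg ^ 2 ≤ 16 * s := by nlinarith
  have h6 : 1024 ≤ c * s := by rw [div_le_iff₀ hc] at hsqn; linarith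
  have h4 : 1024 * s ≤ c * n := by nlinarith [mul_le_mul_of_nonneg_right h6 hsq1]
  rw [le_div_iff₀ hLpos]
  nlinarith

lemma help2 (lg s ss n : ℝ) (h5 : 5 ≤ s) (hs2 : s ^ 2 = n) (hss : ss ^ 2 = s)
    (hss0 : 0 ≤ ss) (hl : lg ≤ 4 * ss) : lg + 2 ≤ n := by
  nlinarith [sq_nonneg (ss - 2), sq_nonneg (s - 2), sq_nonneg (s - ss)]

set_option maxHeartbeats 2000000 in
theorem llb_collisions_per_window (ε : ℝ) (hε : 0 < ε) (hε1 : ε ≤ 1) :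
    ∃ c₀ : ℝ, 0 < c₀ ∧ ∀ c : ℝ, 0 < c → c ≤ c₀ →
      ∃ a : ℝ, 0 < a ∧ ∃ N : ℕ, ∀ n : ℕ, N ≤ n →
        a * (n / Real.logb 2 (Real.logb 2 (Real.logb 2 n))) ≤
          (∑ f : Fin ⌊ε * n⌋₊ →
              Fin ⌈c * n / Real.logb 2 (Real.logb 2 (Real.logb 2 n))⌉₊,
            (collisionCount ⌊ε * n⌋₊
              ⌈c * n / Real.logb 2 (Real.logb 2 (Real.logb 2 n))⌉₊ f : ℝ)) /
            ((⌈c * n / Real.logb 2 (Real.logb 2 (Real.logb 2 n))⌉₊ : ℕ) ^ ⌊ε * n⌋₊ : ℕ) ∧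
        1 - 1 / (n : ℝ) ≤
          ((Finset.univ.filter
              (fun f : Fin ⌊ε * n⌋₊ →
                  Fin ⌈c * n / Real.logb 2 (Real.logb 2 (Real.logb 2 n))⌉₊ =>
                a * (n / Real.logb 2 (Real.logb 2 (Real.logb 2 n))) ≤
                  (collisionCount ⌊ε * n⌋₊
                    ⌈c * n / Real.logb 2 (Real.logb 2 (Real.logb 2 n))⌉₊ f : ℝ))).card : ℝ) /
            ((⌈c * n / Real.logb 2 (Real.logb 2 (Real.logb 2 n))⌉₊ : ℕ) ^ ⌊ε * n⌋₊ : ℕ) := by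
  classical
  refine ⟨1, one_pos, fun c hc hc1 => ?_⟩
  refine ⟨c / 8, by positivity, ?_⟩
  set L₀ : ℝ := 800 * c / ε + 1 with hL₀def
  have hL₀1 : 1 ≤ L₀ := by
    have : 0 ≤ 800 * c / ε := by positivity
    simp only [hL₀def]; linarith
  refine ⟨max (⌈(2:ℝ) ^ ((2:ℝ) ^ ((2:ℝ) ^ L₀))⌉₊ + 1)
    (⌈(1024 / c) ^ 2 + 120 / ε + 30⌉₊ + 1), fun n hn => ?_⟩
  -- basic facts about n
  have hnN₁ : ((2:ℝ) ^ ((2:ℝ) ^ ((2:ℝ) ^ L₀))) ≤ n := by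
    have h1 : ⌈(2:ℝ) ^ ((2:ℝ) ^ ((2:ℝ) ^ L₀))⌉₊ ≤ n := by omega
    exact le_trans (Nat.le_ceil _) (by exact_mod_cast h1)
  have hnN₂ : (1024 / c) ^ 2 + 120 / ε + 30 ≤ (n:ℝ) := by
    have h1 : ⌈(1024 / c) ^ 2 + 120 / ε + 30⌉₊ ≤ n := by omega
    exact le_trans (Nat.le_ceil _) (by exact_mod_cast h1)
  have hc2nn : (0:ℝ) ≤ (1024 / c) ^ 2 := by positivity
  have h120nn : (0:ℝ) ≤ 120 / ε := by positivity
  have hn30 : (30:ℝ) ≤ n := by linarith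
  have hn0 : (0:ℝ) < n := by linarith
  have hn1 : (1:ℝ) ≤ n := by linarith
  have hlog1 : (1:ℝ) ≤ Real.log n := by
    rw [Real.le_log_iff_exp_le hn0]
    have := Real.exp_one_lt_d9
    linarith
  have hlogpos : (0:ℝ) < Real.log n := by linarith
  -- the logb tower
  set A1 : ℝ := Real.logb 2 (n:ℝ) with hA1def
  set A2 : ℝ := Real.logb 2 A1 with hA2def
  set L : ℝ := Real.logb 2 A2 with hLdef
  have h12 : (1:ℝ) < 2 := one_lt_two
  have hA1 : (2:ℝ) ^ ((2:ℝ) ^ L₀) ≤ A1 := by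
    rw [hA1def, Real.le_logb_iff_rpow_le h12 hn0]
    exact hnN₁
  have hexpL₀ : (2:ℝ) ≤ (2:ℝ) ^ L₀ := by
    calc (2:ℝ) = (2:ℝ) ^ (1:ℝ) := (Real.rpow_one 2).symm
      _ ≤ (2:ℝ) ^ L₀ := Real.rpow_le_rpow_of_exponent_le (by norm_num) hL₀1
  have hA1' : (4:ℝ) ≤ A1 := by
    have h2 : (2:ℝ) ^ (2:ℝ) ≤ (2:ℝ) ^ ((2:ℝ) ^ L₀) :=
      Real.rpow_le_rpow_of_exponent_le (by norm_num) hexpL₀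
    have h3 : (2:ℝ) ^ (2:ℝ) = 4 := by
      rw [show (2:ℝ) = ((2:ℕ):ℝ) by norm_num, Real.rpow_natCast]
      norm_num
    linarith
  have hA1pos : (0:ℝ) < A1 := by linarith
  have hA2 : (2:ℝ) ^ L₀ ≤ A2 := by
    rw [hA2def, Real.le_logb_iff_rpow_le h12 hA1pos]
    exact hA1
  have hA2' : (2:ℝ) ≤ A2 := le_trans hexpL₀ hA2
  have hA2pos : (0:ℝ) < A2 := by linarith
  have hL : L₀ ≤ L := by
    rw [hLdef, Real.le_logb_iff_rpow_le h12 hA2pos]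
    exact hA2
  have hL1 : (1:ℝ) ≤ L := le_trans hL₀1 hL
  have hLpos : (0:ℝ) < L := by linarith
  -- upper bound on L
  have hA1up : A1 ≤ 2 * Real.log n := logb_le_two_log hn1
  have hA2up : A2 ≤ 2 * A1 := logb_le_two_mul (by linarith)
  have hLup2 : L ≤ 2 * A2 := logb_le_two_mul (by linarith)
  have hLup : L ≤ 8 * Real.log n := by linarith
  -- parameters
  set b : ℕ := ⌊ε * n⌋₊ with hbdef
  set m : ℕ := ⌈c * n / L⌉₊ with hmdef
  set k : ℕ := ⌈Real.log n⌉₊ with hkdef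
  set h : ℕ := m - m / 4 with hhdef
  have hcnLpos : (0:ℝ) < c * n / L := by positivity
  have hbl : ε * n - 1 ≤ (b:ℝ) := le_of_lt (Nat.sub_one_lt_floor _)
  have hbu : (b:ℝ) ≤ ε * n := Nat.floor_le (by positivity)
  have hml : c * n / L ≤ (m:ℝ) := Nat.le_ceil _
  have hmu : (m:ℝ) ≤ c * n / L + 1 := le_of_lt (Nat.ceil_lt_add_one (le_of_lt hcnLpos))
  have hkl : Real.log n ≤ (k:ℝ) := Nat.le_ceil _
  have hku : (k:ℝ) ≤ Real.log n + 1 := le_of_lt (Nat.ceil_lt_add_one (le_of_lt hlogpos))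
  have hk1 : 1 ≤ k := Nat.one_le_ceil_iff.mpr hlogpos
  have hm1 : 1 ≤ m := Nat.one_le_ceil_iff.mpr hcnLpos
  have hεn : (120:ℝ) ≤ ε * n := by
    have h1 : 120 / ε ≤ (n:ℝ) := by linarith
    calc (120:ℝ) = ε * (120 / ε) := by field_simp
      _ ≤ ε * n := by apply mul_le_mul_of_nonneg_left h1 (le_of_lt hε)
  -- C1 : 100 * m ≤ b
  have hC1 : 100 * m ≤ b := by
    have h1 : c * n / L ≤ ε * n / 800 := by
      have h2 : 800 * c / ε ≤ L := by
        simp only [hL₀def] at hL; linarith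
      have h3 : (0:ℝ) < 800 * c / ε := by positivity
      calc c * n / L ≤ c * n / (800 * c / ε) := by
            apply div_le_div_of_nonneg_left (by positivity) h3 h2
        _ = ε * n / 800 := by field_simp
    have h4 : 100 * (m:ℝ) ≤ (b:ℝ) := by
      calc 100 * (m:ℝ) ≤ 100 * (c * n / L + 1) := by linarith
        _ ≤ 100 * (ε * n / 800 + 1) := by linarith
        _ = ε * n / 8 + 100 := by ring
        _ ≤ ε * n - 1 := by linarith
        _ ≤ (b:ℝ) := hbl
    exact_mod_cast h4
  -- sqrt facts
  have hsq1 : (0:ℝ) ≤ Real.sqrt n := Real.sqrt_nonneg _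
  have hsq2 : Real.sqrt n ^ 2 = (n:ℝ) := Real.sq_sqrt (le_of_lt hn0)
  have hssq : Real.sqrt (Real.sqrt n) ^ 2 = Real.sqrt n := Real.sq_sqrt hsq1
  have hlogsq : Real.log n ≤ 4 * Real.sqrt (Real.sqrt n) := log_le_four_sqrt_sqrt hn1
  have hsqn : 1024 / c ≤ Real.sqrt n := by
    rw [Real.le_sqrt (by positivity) (le_of_lt hn0)]
    linarith
  -- C2 : 4 * k ≤ m
  have hC2 : 4 * k ≤ m := by
    have h6 : 8 * Real.log n ≤ c * n / L :=
      help1 c L (Real.log n) (Real.sqrt n) (Real.sqrt (Real.sqrt n)) n hc hlogpos hsq1 hsq2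
        hssq (Real.sqrt_nonneg _) hlogsq hsqn hLpos hLup
    have h7 : (4:ℝ) * k ≤ (m:ℝ) := by linarith
    exact_mod_cast h7
  -- C3 : h facts
  have hC3 : m ≤ 2 * h := by omega
  have hC3' : h ≤ m := by omega
  -- C4 : n * (k+1) ≤ exp(k*b/(4m))
  have hmpos : (0:ℝ) < m := by
    have : (0:ℕ) < m := hm1
    exact_mod_cast this
  have hC4 : (n : ℝ) * (k + 1) ≤ Real.exp ((k : ℝ) * b / (4 * m)) := by
    have hbm' : (100:ℝ) * m ≤ b := by exact_mod_cast hC1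
    have hknn : (0:ℝ) ≤ k := Nat.cast_nonneg k
    have h1 : 25 * (k:ℝ) ≤ (k : ℝ) * b / (4 * m) := by
      rw [le_div_iff₀ (by positivity)]
      calc 25 * (k:ℝ) * (4 * m) = (k:ℝ) * (100 * m) := by ring
        _ ≤ (k:ℝ) * b := mul_le_mul_of_nonneg_left hbm' hknn
    have h5 : (5:ℝ) ≤ Real.sqrt n := by
      rw [Real.le_sqrt (by norm_num) (le_of_lt hn0)]
      linarith
    have h4 : Real.log n + 2 ≤ (n:ℝ) :=
      help2 (Real.log n) (Real.sqrt n) (Real.sqrt (Real.sqrt n)) n h5 hsq2 hssq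
        (Real.sqrt_nonneg _) hlogsq
    have h8 : (k:ℝ) + 1 ≤ (n:ℝ) := by linarith
    have h7 : Real.exp (2 * Real.log n + Real.log n) = (n:ℝ) ^ (3:ℕ) := by
      rw [show 2 * Real.log n + Real.log n = ((3:ℕ):ℝ) * Real.log n by push_cast; ring,
        Real.exp_nat_mul, Real.exp_log hn0]
    have h2 : (n:ℝ) * (k + 1) ≤ Real.exp (2 * Real.log n + Real.log n) := by
      rw [h7]
      calc (n:ℝ) * ((k:ℝ) + 1) ≤ (n:ℝ) * n := mul_le_mul_of_nonneg_left h8 (le_of_lt hn0)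
        _ = (n:ℝ) * n * 1 := by ring
        _ ≤ (n:ℝ) * n * n := mul_le_mul_of_nonneg_left hn1 (by positivity)
        _ = (n:ℝ) ^ (3:ℕ) := by ring
    have h9 : 2 * Real.log n + Real.log n ≤ 25 * (k:ℝ) := by linarith
    calc (n:ℝ) * (k + 1) ≤ Real.exp (2 * Real.log n + Real.log n) := h2
      _ ≤ Real.exp ((k : ℝ) * b / (4 * m)) := by
          apply Real.exp_le_exp.mpr
          linarith
  -- main bound
  have hmain := main_bound b m k h n hk1 hC2 hC3 hC3' hC1 hC4
  -- denominator positivity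
  have hMBpos : (0:ℝ) < ((m ^ b : ℕ) : ℝ) := by
    have : 0 < m ^ b := Nat.pow_pos hm1
    exact_mod_cast this
  have hMBcast : ((m ^ b : ℕ) : ℝ) = (m:ℝ) ^ b := by push_cast; rfl
  -- good set with threshold c*n/(4L)
  set G4 := (univ : Finset (Fin b → Fin m)).filter
      (fun f => c * n / (4 * L) ≤ (collisionCount b m f : ℝ)) with hG4def
  have hcompl : (univ : Finset (Fin b → Fin m)).filter
      (fun f => ¬ (c * n / (4 * L) ≤ (collisionCount b m f : ℝ))) ⊆
      (univ : Finset (Fin b → Fin m)).filter (fun f => h ≤ (lowBins b m f).card) := by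
    intro f hf
    rw [Finset.mem_filter] at hf ⊢
    refine ⟨Finset.mem_univ _, ?_⟩
    have hx : (collisionCount b m f : ℝ) < c * n / (4 * L) := by
      have := hf.2; linarith [not_le.mp this]
    have hthr : c * n / (4 * L) ≤ (m:ℝ) / 4 := by
      rw [div_le_div_iff₀ (by positivity) (by norm_num)]
      calc c * n * 4 = (c * n / L) * (4 * L) := by field_simp
        _ ≤ (m:ℝ) * (4 * L) := by
            apply mul_le_mul_of_nonneg_right hml (by positivity)
    have hx2 : (collisionCount b m f : ℝ) * 4 < m := by
      have := lt_of_lt_of_le hx hthr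
      linarith
    have hx3 : collisionCount b m f * 4 < m := by exact_mod_cast hx2
    have hxy := collision_add_low b m f
    omega
  have hcardsum : G4.card + ((univ : Finset (Fin b → Fin m)).filter
      (fun f => ¬ (c * n / (4 * L) ≤ (collisionCount b m f : ℝ)))).card = m ^ b := by
    rw [hG4def, Finset.card_filter_add_card_filter_not, Finset.card_univ]
    rw [Fintype.card_fun, Fintype.card_fin, Fintype.card_fin]
  have hBadR : (((univ : Finset (Fin b → Fin m)).filter
      (fun f => ¬ (c * n / (4 * L) ≤ (collisionCount b m f : ℝ)))).card : ℝ) ≤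
      ((m ^ b : ℕ) : ℝ) / n := by
    rw [le_div_iff₀ hn0]
    calc ((((univ : Finset (Fin b → Fin m)).filter
          (fun f => ¬ (c * n / (4 * L) ≤ (collisionCount b m f : ℝ)))).card : ℝ)) * n
        ≤ ((((univ : Finset (Fin b → Fin m)).filter
            (fun f => h ≤ (lowBins b m f).card)).card : ℝ)) * n := by
          apply mul_le_mul_of_nonneg_right _ (le_of_lt hn0)
          exact_mod_cast Finset.card_le_card hcompl
      _ = (n:ℝ) * (((univ : Finset (Fin b → Fin m)).filter
            (fun f => h ≤ (lowBins b m f).card)).card : ℝ) := by ring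
      _ ≤ (m:ℝ) ^ b := hmain
      _ = ((m ^ b : ℕ) : ℝ) := hMBcast.symm
  have hG4R : ((m ^ b : ℕ) : ℝ) - ((m ^ b : ℕ) : ℝ) / n ≤ (G4.card : ℝ) := by
    have h1 : ((m ^ b : ℕ):ℝ) = (G4.card : ℝ) + (((univ : Finset (Fin b → Fin m)).filter
        (fun f => ¬ (c * n / (4 * L) ≤ (collisionCount b m f : ℝ)))).card : ℝ) := by
      exact_mod_cast hcardsum.symm
    linarith
  -- conjunct 2
  have hijk : (c / 8) * ((n:ℝ) / L) ≤ c * n / (4 * L) := by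
    have e1 : (c / 8) * ((n:ℝ) / L) = (c * n / L) / 8 := by ring
    have e2 : c * n / (4 * L) = (c * n / L) / 4 := by ring
    rw [e1, e2]
    linarith
  have hGsub : G4 ⊆ (univ : Finset (Fin b → Fin m)).filter
      (fun f => (c / 8) * ((n:ℝ) / L) ≤ (collisionCount b m f : ℝ)) := by
    intro f hf
    rw [hG4def, Finset.mem_filter] at hf
    rw [Finset.mem_filter]
    exact ⟨hf.1, le_trans hijk hf.2⟩
  have hG4half : ((m ^ b : ℕ) : ℝ) / 2 ≤ (G4.card : ℝ) := by
    have h1n : 1 / (n:ℝ) ≤ 1 / 2 := by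
      rw [div_le_div_iff₀ hn0 (by norm_num)]
      linarith
    have h2 : ((m ^ b : ℕ) : ℝ) / n ≤ ((m ^ b : ℕ) : ℝ) / 2 := by
      calc ((m ^ b : ℕ) : ℝ) / n = ((m ^ b : ℕ) : ℝ) * (1 / n) := by ring
        _ ≤ ((m ^ b : ℕ) : ℝ) * (1 / 2) := mul_le_mul_of_nonneg_left h1n (le_of_lt hMBpos)
        _ = ((m ^ b : ℕ) : ℝ) / 2 := by ring
    linarith
  constructor
  · -- expectation bound
    rw [le_div_iff₀ hMBpos]
    have hsum1 : (G4.card : ℝ) * (c * n / (4 * L)) ≤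
        ∑ f : Fin b → Fin m, (collisionCount b m f : ℝ) := by
      calc (G4.card : ℝ) * (c * n / (4 * L)) = ∑ _f ∈ G4, c * n / (4 * L) := by
            rw [Finset.sum_const, nsmul_eq_mul]
        _ ≤ ∑ f ∈ G4, (collisionCount b m f : ℝ) :=
            Finset.sum_le_sum (fun f hf => (Finset.mem_filter.mp hf).2)
        _ ≤ ∑ f : Fin b → Fin m, (collisionCount b m f : ℝ) :=
            Finset.sum_le_sum_of_subset_of_nonneg (Finset.subset_univ _)
              (fun f _ _ => by positivity)
    calc c / 8 * ((n:ℝ) / L) * ((m ^ b : ℕ) : ℝ)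
        = (c * n / (4 * L)) * (((m ^ b : ℕ) : ℝ) / 2) := by ring
      _ ≤ (c * n / (4 * L)) * (G4.card : ℝ) :=
          mul_le_mul_of_nonneg_left hG4half (by positivity)
      _ = (G4.card : ℝ) * (c * n / (4 * L)) := by ring
      _ ≤ ∑ f : Fin b → Fin m, (collisionCount b m f : ℝ) := hsum1
  · -- probability bound
    rw [le_div_iff₀ hMBpos]
    have hGoodcard : (G4.card : ℝ) ≤
        (((univ : Finset (Fin b → Fin m)).filter
          (fun f => (c / 8) * ((n:ℝ) / L) ≤ (collisionCount b m f : ℝ))).card : ℝ) := by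
      exact_mod_cast Finset.card_le_card hGsub
    have heq : (1 - 1 / (n:ℝ)) * ((m ^ b : ℕ) : ℝ) =
        ((m ^ b : ℕ) : ℝ) - ((m ^ b : ℕ) : ℝ) / n := by ring
    rw [heq]
    linarith
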